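/- Let S and A be finite nonempty sets, α ∈ (0,1), γ ∈ [0,1), and β > 0. Let (s_k,a_k,s'_k) ∈ S×A×S, k ≥ 0, be arbitrary sequences and let r_k ∈ ℝ satisfy |r_k| ≤ 1 for all k. Let Q_0 : S×A → ℝ satisfy ‖Q_0‖_∞ ≤ 1 and define recursively Q_{k+1}(s,a) = Q_k(s,a) + α·𝟙[(s,a)=(s_k,a_k)]·(r_k + γ·h_Boltz^β(Q_k(s'_k,·)) − Q_k(s_k,a_k)). Then for all k ≥ 0, ‖Q_k‖_∞ ≤ (1/(1−γ))·(1 + γ·log(|A|)/β). -/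

import Mathlib

lemma boltz_abs_le {A : Type*} [Fintype A] [Nonempty A] (β M : ℝ) (v : A → ℝ)
    (h : ∀ b, |v b| ≤ M) :
    |(∑ b, v b * Real.exp (β * v b)) / (∑ b, Real.exp (β * v b))| ≤ M := by
  have hden : 0 < ∑ b, Real.exp (β * v b) :=
    Finset.sum_pos (fun b _ => Real.exp_pos _) Finset.univ_nonempty
  rw [abs_div, abs_of_pos hden, div_le_iff₀ hden]
  calc |∑ b, v b * Real.exp (β * v b)| ≤ ∑ b, |v b * Real.exp (β * v b)| :=
        Finset.abs_sum_le_sum_abs _ _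
    _ ≤ ∑ b, M * Real.exp (β * v b) := by
        apply Finset.sum_le_sum
        intro b _
        rw [abs_mul, abs_of_pos (Real.exp_pos _)]
        exact mul_le_mul_of_nonneg_right (h b) (Real.exp_pos _).le
    _ = M * ∑ b, Real.exp (β * v b) := by rw [Finset.mul_sum]

/-- **Boundedness of Boltzmann soft Q-learning iterates.** With step size `α ∈ (0,1)`,
discount `γ ∈ [0,1)`, parameter `β > 0`, unit-bounded rewards and unit-bounded
initial iterate, the Boltzmann soft Q-learning iterates satisfy
`‖Q_k‖_∞ ≤ (1/(1−γ))·(1 + γ·log|A|/β)` for all `k`. -/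
theorem boltzmann_soft_q_iterates_bounded {S A : Type*} [Fintype S] [Fintype A]
    [Nonempty S] [Nonempty A] [DecidableEq S] [DecidableEq A]
    (α γ β : ℝ) (hα : α ∈ Set.Ioo (0 : ℝ) 1) (hγ : γ ∈ Set.Ico (0 : ℝ) 1) (hβ : 0 < β)
    (sk : ℕ → S) (ak : ℕ → A) (sk' : ℕ → S)
    (r : ℕ → ℝ) (hr : ∀ k, |r k| ≤ 1)
    (Q : ℕ → S → A → ℝ) (hQ0 : ∀ s a, |Q 0 s a| ≤ 1)
    (hrec : ∀ k s a, Q (k + 1) s a = Q k s a +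
      α * (if (s, a) = (sk k, ak k) then (1 : ℝ) else 0) *
        (r k + γ * ((∑ b, Q k (sk' k) b * Real.exp (β * Q k (sk' k) b)) /
            (∑ b, Real.exp (β * Q k (sk' k) b)))
          - Q k (sk k) (ak k))) :
    ∀ k s a, |Q k s a| ≤ (1 / (1 - γ)) * (1 + γ * Real.log (Fintype.card A) / β) := by
  obtain ⟨hα0, hα1⟩ := hα
  obtain ⟨hγ0, hγ1⟩ := hγ
  set c := γ * Real.log (Fintype.card A) / β with hcdef
  set M := (1 / (1 - γ)) * (1 + c) with hM
  have hγ' : (0 : ℝ) < 1 - γ := by linarith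
  have hc : 0 ≤ c := by
    apply div_nonneg _ hβ.le
    apply mul_nonneg hγ0
    apply Real.log_nonneg
    exact_mod_cast Fintype.card_pos
  have hMeq : M * (1 - γ) = 1 + c := by rw [hM]; field_simp
  have hMeq2 : M - γ * M = 1 + c := by linear_combination hMeq
  have hMpos : 0 < M := mul_pos (by positivity) (by linarith)
  have hγM : 0 ≤ γ * M := mul_nonneg hγ0 hMpos.le
  have hM1 : 1 + γ * M ≤ M := by linarith
  have hMge1 : 1 ≤ M := by linarith
  intro k
  induction k with
  | zero => intro s a; exact (hQ0 s a).trans hMge1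
  | succ k ih =>
    intro s a
    rw [hrec]
    by_cases hsa : (s, a) = (sk k, ak k)
    · rw [Prod.ext_iff] at hsa
      obtain ⟨hs, ha⟩ := hsa
      simp only at hs ha
      subst hs; subst ha
      rw [if_pos rfl]
      have hq : |Q k (sk k) (ak k)| ≤ M := ih (sk k) (ak k)
      have hB : |(∑ b, Q k (sk' k) b * Real.exp (β * Q k (sk' k) b)) /
          (∑ b, Real.exp (β * Q k (sk' k) b))| ≤ M :=
        boltz_abs_le β M (Q k (sk' k)) (fun b => ih (sk' k) b)
      set B := (∑ b, Q k (sk' k) b * Real.exp (β * Q k (sk' k) b)) /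
          (∑ b, Real.exp (β * Q k (sk' k) b))
      have key : Q k (sk k) (ak k) + α * 1 * (r k + γ * B - Q k (sk k) (ak k))
          = (1 - α) * Q k (sk k) (ak k) + α * (r k + γ * B) := by ring
      rw [key]
      have hrgB : |r k + γ * B| ≤ 1 + γ * M := by
        calc |r k + γ * B| ≤ |r k| + |γ * B| := abs_add_le _ _
          _ ≤ 1 + γ * M := by
              rw [abs_mul, abs_of_nonneg hγ0]
              exact add_le_add (hr k) (mul_le_mul_of_nonneg_left hB hγ0)
      calc |(1 - α) * Q k (sk k) (ak k) + α * (r k + γ * B)|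
          ≤ |(1 - α) * Q k (sk k) (ak k)| + |α * (r k + γ * B)| := abs_add_le _ _
        _ = (1 - α) * |Q k (sk k) (ak k)| + α * |r k + γ * B| := by
            rw [abs_mul, abs_mul, abs_of_pos (by linarith : (0:ℝ) < 1 - α),
              abs_of_pos hα0]
        _ ≤ (1 - α) * M + α * (1 + γ * M) :=
            add_le_add (mul_le_mul_of_nonneg_left hq (by linarith))
              (mul_le_mul_of_nonneg_left hrgB hα0.le)
        _ ≤ (1 - α) * M + α * M :=
            add_le_add le_rfl (mul_le_mul_of_nonneg_left hM1 hα0.le)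
        _ = M := by ring
    · rw [if_neg hsa]
      simpa using ih s a
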